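/- Let d ≥ 3 and I = (L(u,v)) a lexsegment ideal such that w = x_2·u/x_1, where w is the largest degree-d monomial with w <_lex v, and suppose v ≤_lex x_2^{d-1}x_n. Then for every k ≥ d, the monomial m = (x_2^{d-1}x_n)^k / x_n satisfies m ∉ I^k and x_i·m ∈ I^k for all i; hence depth(S/I^k) = 0. -/

import Mathlib

open MvPolynomial

noncomputable section

namespace LexPaper

/-- total degree of an exponent vector -/
def deg {sigma : Type*} (a : sigma  →₀  ℕ) : ℕ := a.sum fun _ e => e

/-- the monomial x^a as an element of the polynomial ring -/
def mon (k : Type*) [Field k] {sigma : Type*} (a : sigma  →₀  ℕ) : MvPolynomial sigma k :=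
  MvPolynomial.monomial a 1

/-- `lexLe a b` : a ≤_lex b, where x_1 > x_2 > ... > x_n (index 0 is the largest variable). -/
def lexLe {n : ℕ} (a b : Fin n  →₀  ℕ) : Prop := toLex a ≤ toLex b

/-- `lexLt a b` : a <_lex b. -/
def lexLt {n : ℕ} (a b : Fin n  →₀  ℕ) : Prop := toLex a < toLex b

/-- the lexsegment set L(u,v) : all exponent vectors of degree d between v and u in lex order -/
def lexSeg {n : ℕ} (d : ℕ) (u v : Fin n  →₀  ℕ) : Set (Fin n  →₀  ℕ) :=
  {m | deg m = d  ∧  lexLe v m  ∧  lexLe m u}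

/-- the lexsegment ideal (L(u,v)) -/
def lexIdeal (k : Type*) [Field k] {n : ℕ} (d : ℕ) (u v : Fin n  →₀  ℕ) :
    Ideal (MvPolynomial (Fin n) k) :=
  Ideal.span (mon k '' lexSeg d u v)

/-- the maximal graded ideal (x_1, ..., x_n) -/
def mMax (k : Type*) [Field k] (n : ℕ) : Ideal (MvPolynomial (Fin n) k) :=
  Ideal.span (Set.range (X : Fin n -> MvPolynomial (Fin n) k))

/-- depth of S/I: the supremum of lengths of regular sequences on S/I consisting of
elements of the maximal graded ideal -/
def quotDepth (k : Type*) [Field k] {n : ℕ} (I : Ideal (MvPolynomial (Fin n) k)) : ℕ :=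
  sSup {r : ℕ | ∃ rs : List (MvPolynomial (Fin n) k), rs.length = r  ∧ 
    (∀ x ∈ rs, x ∈ mMax k n)  ∧  RingTheory.Sequence.IsRegular (MvPolynomial (Fin n) k ⧸ I) rs}

/-! ### Auxiliary lemmas -/

section Aux

variable {k : Type*} [Field k] {n : ℕ}

lemma deg_single (i : Fin n) (c : ℕ) : deg (Finsupp.single i c) = c := by
  simp [deg]

lemma deg_add (a b : Fin n →₀ ℕ) : deg (a + b) = deg a + deg b :=
  Finsupp.sum_add_index' (fun _ => rfl) (fun _ _ _ => rfl)

lemma deg_smul (c : ℕ) (a : Fin n →₀ ℕ) : deg (c • a) = c * deg a := by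
  induction c with
  | zero => simp [deg]
  | succ c ih => rw [succ_nsmul, deg_add, ih]; ring

lemma deg_eq_sum (a : Fin n →₀ ℕ) : deg a = ∑ j, a j :=
  Finsupp.sum_fintype _ _ (fun _ => rfl)

lemma deg_mono {a b : Fin n →₀ ℕ} (h : a ≤ b) : deg a ≤ deg b := by
  rw [deg_eq_sum, deg_eq_sum]
  exact Finset.sum_le_sum fun j _ => Finsupp.le_def.mp h j

lemma mon_mul (a b : Fin n →₀ ℕ) : mon k a * mon k b = mon k (a + b) := by
  simp [mon, monomial_mul]

lemma mon_pow (a : Fin n →₀ ℕ) (c : ℕ) : (mon k a) ^ c = mon k (c • a) := by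
  simp [mon, monomial_pow]

/-- a lex comparison witnessed at the first position -/
lemma lex_lt_of_lt_at_zero {i0 : Fin n} (h0 : (i0 : ℕ) = 0) {a b : Fin n →₀ ℕ}
    (h : a i0 < b i0) : toLex a < toLex b := by
  rw [Finsupp.Lex.lt_iff]
  refine ⟨i0, fun j hj => ?_, h⟩
  have := Fin.lt_def.mp hj
  omega

/-- `single (n-1) c` is the lex-smallest exponent vector of total degree `c`. -/
lemma lex_single_le {iN : Fin n} (hN : (iN : ℕ) = n - 1) {c : ℕ} (x : Fin n →₀ ℕ)
    (hx : deg x = c) : toLex (Finsupp.single iN c) ≤ toLex x := by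
  by_cases hz : ∀ j : Fin n, j.1 < n - 1 → x j = 0
  · have hxe : x = Finsupp.single iN c := by
      have hsum : deg x = x iN := by
        rw [deg_eq_sum]
        apply Finset.sum_eq_single_of_mem _ (Finset.mem_univ _)
        intro b _ hb
        apply hz
        have hb1 : b.1 < n := b.2
        have : b.1 ≠ n - 1 := fun h => hb (Fin.ext (by omega))
        omega
      ext j
      rcases eq_or_ne j iN with rfl | hj
      · rw [← hsum, hx, Finsupp.single_apply, if_pos rfl]
      · have hj1 : j.1 < n - 1 := by
          have h2 := j.2
          have : j.1 ≠ n - 1 := fun h => hj (Fin.ext (by omega))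
          omega
        rw [hz j hj1, Finsupp.single_apply, if_neg (fun h => hj h.symm)]
    rw [hxe]
  · push_neg at hz
    apply le_of_lt
    rw [Finsupp.Lex.lt_iff]
    obtain ⟨j0, hj0lt, hj0⟩ := hz
    have hs : (Finset.univ.filter fun j : Fin n => j.1 < n - 1 ∧ x j ≠ 0).Nonempty :=
      ⟨j0, by simp [hj0lt, hj0]⟩
    set s := Finset.univ.filter fun j : Fin n => j.1 < n - 1 ∧ x j ≠ 0 with hsdef
    have hi_mem := Finset.mem_filter.mp (Finset.min'_mem s hs)
    refine ⟨s.min' hs, ?_, ?_⟩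
    · intro j hj
      have hj1 : j.1 < n - 1 := lt_trans (Fin.lt_def.mp hj) hi_mem.2.1
      have hxj : x j = 0 := by
        by_contra hne
        exact absurd hj (not_lt.mpr (Finset.min'_le s j
          (Finset.mem_filter.mpr ⟨Finset.mem_univ _, hj1, hne⟩)))
      show (Finsupp.single iN c) j = x j
      rw [hxj, Finsupp.single_apply, if_neg]
      intro h
      have : (iN : ℕ) = j.1 := congrArg Fin.val h
      omega
    · show (Finsupp.single iN c) _ < x _
      rw [Finsupp.single_apply, if_neg]
      · exact Nat.pos_of_ne_zero hi_mem.2.2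
      · intro h
        have h' : (iN : ℕ) = (s.min' hs).1 := congrArg Fin.val h
        have := hi_mem.2.1
        omega

/-- the ideal generated by all monomials of degree at least `D` -/
def Kdeg (k : Type*) [Field k] {n : ℕ} (D : ℕ) : Ideal (MvPolynomial (Fin n) k) :=
  Ideal.span ((fun s => monomial s (1 : k)) '' {a : Fin n →₀ ℕ | D ≤ deg a})

lemma mem_Kdeg_iff {D : ℕ} {p : MvPolynomial (Fin n) k} :
    p ∈ Kdeg k D ↔ ∀ xi ∈ p.support, ∃ si, D ≤ deg si ∧ si ≤ xi := by
  unfold Kdeg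
  rw [mem_ideal_span_monomial_image]
  exact Iff.rfl

lemma Kdeg_mul (D1 D2 : ℕ) : Kdeg k (n := n) D1 * Kdeg k D2 ≤ Kdeg k (D1 + D2) := by
  unfold Kdeg
  rw [Ideal.span_mul_span']
  apply Ideal.span_le.mpr
  rintro x hx
  rw [Set.mem_mul] at hx
  obtain ⟨y, hy, z, hz, rfl⟩ := hx
  obtain ⟨a, ha, rfl⟩ := hy
  obtain ⟨b, hb, rfl⟩ := hz
  apply Ideal.subset_span
  refine ⟨a + b, ?_, ?_⟩
  · have ha' : D1 ≤ deg a := ha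
    have hb' : D2 ≤ deg b := hb
    show D1 + D2 ≤ deg (a + b)
    rw [deg_add]; omega
  · simp [monomial_mul]

lemma lexIdeal_le_Kdeg {d : ℕ} (u v : Fin n →₀ ℕ) : lexIdeal k d u v ≤ Kdeg k d := by
  apply Ideal.span_le.mpr
  rintro x ⟨a, ha, rfl⟩
  apply Ideal.subset_span
  exact ⟨a, le_of_eq ha.1.symm, rfl⟩

lemma pow_le_Kdeg {d : ℕ} (u v : Fin n →₀ ℕ) (s : ℕ) :
    (lexIdeal k d u v) ^ (s + 1) ≤ Kdeg k ((s + 1) * d) := by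
  induction s with
  | zero => simpa using lexIdeal_le_Kdeg u v
  | succ s ih =>
    rw [pow_succ]
    calc (lexIdeal k d u v) ^ (s+1) * lexIdeal k d u v
        ≤ Kdeg k ((s+1)*d) * Kdeg k d := Ideal.mul_mono ih (lexIdeal_le_Kdeg u v)
      _ ≤ Kdeg k ((s+1)*d + d) := Kdeg_mul _ _
      _ = Kdeg k ((s+2)*d) := by ring_nf

end Aux

theorem master {k : Type*} [Field k] {n d : ℕ} (hn : 2 ≤ n) (hd : 3 ≤ d)
    (i0 i1 iN : Fin n) (h0 : (i0 : ℕ) = 0) (h1 : (i1 : ℕ) = 1) (hN : (iN : ℕ) = n - 1)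
    (u v : Fin n →₀ ℕ) (hu : deg u = d) (hx1u : 0 < u i0) (hx1v : v i0 = 0)
    (hvle : lexLe v (Finsupp.single i1 (d-1) + Finsupp.single iN 1))
    (t : ℕ) (ht : d ≤ t) :
    mon k (t • (Finsupp.single i1 (d-1) + Finsupp.single iN 1) - Finsupp.single iN 1)
        ∉ (lexIdeal k d u v) ^ t ∧
    (∀ i : Fin n, X i * mon k (t • (Finsupp.single i1 (d-1) + Finsupp.single iN 1) - Finsupp.single iN 1)
        ∈ (lexIdeal k d u v) ^ t) ∧
    quotDepth k ((lexIdeal k d u v) ^ t) = 0 := by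
  have hne10 : i1 ≠ i0 := fun h => by have := congrArg Fin.val h; omega
  have hneN0 : iN ≠ i0 := fun h => by have := congrArg Fin.val h; omega
  set I := lexIdeal k d u v with hIdef
  set g := Finsupp.single i1 (d-1) + Finsupp.single iN 1 with hgdef
  set m' := t • g - Finsupp.single iN 1 with hm'def
  have hgen : ∀ a ∈ lexSeg d u v, mon k a ∈ I := fun a ha => Ideal.subset_span ⟨a, ha, rfl⟩
  have hdg : deg g = d := by rw [hgdef, deg_add, deg_single, deg_single]; omega
  have hgi0 : g i0 = 0 := by
    rw [hgdef, Finsupp.add_apply, Finsupp.single_apply, if_neg hne10,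
      Finsupp.single_apply, if_neg hneN0]
    rfl
  have hgu : lexLe g u := le_of_lt (lex_lt_of_lt_at_zero h0 (by rw [hgi0]; exact hx1u))
  have gmem : g ∈ lexSeg d u v := ⟨hdg, hvle, hgu⟩
  have hgiN : 1 ≤ g iN := by
    rw [hgdef, Finsupp.add_apply]
    have : (Finsupp.single iN 1) iN = 1 := by rw [Finsupp.single_apply, if_pos rfl]
    omega
  have hsle : Finsupp.single iN 1 ≤ t • g := by
    rw [Finsupp.single_le_iff, Finsupp.smul_apply, smul_eq_mul]
    exact Nat.one_le_iff_ne_zero.mpr (Nat.mul_ne_zero (by omega) (by omega))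
  have hm : m' + Finsupp.single iN 1 = t • g := tsub_add_cancel_of_le hsle
  have hdm : deg m' + 1 = t * d := by
    have hc := congrArg deg hm
    rwa [deg_add, deg_single, deg_smul, hdg] at hc
  -- Part 1: non-membership
  have hnot : mon k m' ∉ I ^ t := by
    intro hmem
    have hKt : I ^ t ≤ Kdeg k (t * d) := by
      have h' : t - 1 + 1 = t := by omega
      have h2 := pow_le_Kdeg (k := k) (d := d) u v (t - 1)
      rwa [h', ← hIdef] at h2
    have h3 := mem_Kdeg_iff.mp (hKt hmem)
    have hsup : m' ∈ (mon k m' : MvPolynomial (Fin n) k).support := by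
      simp [mon, support_monomial]
    obtain ⟨si, hsi1, hsi2⟩ := h3 m' hsup
    have := deg_mono hsi2
    omega
  -- Part 2: multiples by the variables
  have hxi : ∀ i : Fin n, X i * mon k m' ∈ I ^ t := by
    intro i
    have hXmon : (X i : MvPolynomial (Fin n) k) = mon k (Finsupp.single i 1) := rfl
    by_cases hi : i = i0
    · subst hi
      -- the generators : a = x1 * xn^(d-1), h' = x2^d, g
      set a := Finsupp.single i 1 + Finsupp.single iN (d-1) with hadef
      set h' := Finsupp.single i1 d with hh'def
      -- u = single i 1 + u'
      have hle1 : Finsupp.single i 1 ≤ u := Finsupp.single_le_iff.mpr hx1u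
      have hu' : Finsupp.single i 1 + (u - Finsupp.single i 1) = u := by
        rw [add_comm]; exact tsub_add_cancel_of_le hle1
      have hdegu' : deg (u - Finsupp.single i 1) = d - 1 := by
        have hc := congrArg deg hu'
        rw [deg_add, deg_single, hu] at hc
        omega
      have amem : a ∈ lexSeg d u v := by
        refine ⟨by rw [hadef, deg_add, deg_single, deg_single]; omega, ?_, ?_⟩
        · apply le_of_lt
          apply lex_lt_of_lt_at_zero h0
          rw [hx1v, hadef, Finsupp.add_apply, Finsupp.single_apply, if_pos rfl,
            Finsupp.single_apply, if_neg hneN0]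
          omega
        · show toLex a ≤ toLex u
          rw [← hu', hadef, toLex_add, toLex_add]
          exact add_le_add_right (lex_single_le hN _ hdegu') _
      have h'mem : h' ∈ lexSeg d u v := by
        refine ⟨by rw [hh'def, deg_single], ?_, ?_⟩
        · show toLex v ≤ toLex h'
          apply le_trans hvle
          have hsplit : h' = Finsupp.single i1 (d-1) + Finsupp.single i1 1 := by
            rw [hh'def, ← Finsupp.single_add]
            congr 1
            omega
          rw [hsplit, hgdef, toLex_add, toLex_add]
          exact add_le_add_right (lex_single_le hN _ (deg_single _ _)) _
        · apply le_of_lt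
          apply lex_lt_of_lt_at_zero h0
          rw [hh'def, Finsupp.single_apply, if_neg hne10]
          exact hx1u
      -- the key exponent identity
      have harith : t * (d-1) = (d-1) * d + (t-d) * (d-1) := by
        have h' : t = d + (t - d) := by omega
        calc t * (d-1) = (d + (t-d)) * (d-1) := by rw [← h']
          _ = (d-1) * d + (t-d) * (d-1) := by ring
      have s1 : Finsupp.single i1 (t * (d-1)) =
          Finsupp.single i1 ((d-1) * d) + Finsupp.single i1 ((t-d) * (d-1)) := by
        rw [← Finsupp.single_add, ← harith]
      have s2 : Finsupp.single iN (t * 1) =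
          Finsupp.single iN (d-1) + (Finsupp.single iN ((t-d) * 1) + Finsupp.single iN 1) := by
        rw [← Finsupp.single_add, ← Finsupp.single_add]
        congr 1
        omega
      have key : Finsupp.single i 1 + m' = a + ((d-1) • h' + (t-d) • g) := by
        apply add_right_cancel (b := Finsupp.single iN 1)
        rw [add_assoc, hm]
        rw [hadef, hh'def, hgdef]
        simp only [smul_add, Finsupp.smul_single, smul_eq_mul]
        rw [s1, s2]
        abel
      have hprod : mon k (Finsupp.single i 1 + m') ∈ I ^ t := by
        have heq : mon k (Finsupp.single i 1 + m') =
            mon k a * ((mon k h') ^ (d-1) * (mon k g) ^ (t-d)) := by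
          rw [key, mon_pow, mon_pow, mon_mul, mon_mul]
        have hfin : I ^ t = I ^ 1 * (I ^ (d-1) * I ^ (t-d)) := by
          rw [← pow_add, ← pow_add]
          congr 1
          omega
        rw [heq, hfin]
        exact Ideal.mul_mem_mul (by rw [pow_one]; exact hgen a amem)
          (Ideal.mul_mem_mul (Ideal.pow_mem_pow (hgen h' h'mem) _)
            (Ideal.pow_mem_pow (hgen g gmem) _))
      rw [hXmon, mon_mul]
      exact hprod
    · -- i ≠ i0
      set hmon := Finsupp.single i1 (d-1) + Finsupp.single i 1 with hhdef
      have himem : hmon ∈ lexSeg d u v := by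
        refine ⟨by rw [hhdef, deg_add, deg_single, deg_single]; omega, ?_, ?_⟩
        · show toLex v ≤ toLex hmon
          apply le_trans hvle
          rw [hhdef, hgdef, toLex_add, toLex_add]
          exact add_le_add_right (lex_single_le hN _ (deg_single _ _)) _
        · apply le_of_lt
          apply lex_lt_of_lt_at_zero h0
          rw [hhdef, Finsupp.add_apply, Finsupp.single_apply, if_neg hne10,
            Finsupp.single_apply, if_neg hi]
          exact hx1u
      have hsucc : (t-1) • g + g = t • g := by
        rw [← succ_nsmul]
        congr 1
        omega
      have key : Finsupp.single i 1 + m' = hmon + (t-1) • g := by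
        apply add_right_cancel (b := Finsupp.single iN 1)
        rw [add_assoc, hm, ← hsucc, hhdef, hgdef]
        simp only [smul_add]
        abel
      have hprod : mon k (Finsupp.single i 1 + m') ∈ I ^ t := by
        have heq : mon k (Finsupp.single i 1 + m') = mon k hmon * (mon k g) ^ (t-1) := by
          rw [key, mon_pow, mon_mul]
        have hfin : I ^ t = I ^ 1 * I ^ (t-1) := by
          rw [← pow_add]
          congr 1
          omega
        rw [heq, hfin]
        exact Ideal.mul_mem_mul (by rw [pow_one]; exact hgen hmon himem)
          (Ideal.pow_mem_pow (hgen g gmem) _)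
      rw [hXmon, mon_mul]
      exact hprod
  refine ⟨hnot, hxi, ?_⟩
  -- Part 3: depth zero
  have hquot0 : ∀ r ∈ {r : ℕ | ∃ rs : List (MvPolynomial (Fin n) k), rs.length = r ∧
      (∀ x ∈ rs, x ∈ mMax k n) ∧
      RingTheory.Sequence.IsRegular (MvPolynomial (Fin n) k ⧸ I ^ t) rs}, r = 0 := by
    rintro r ⟨rs, hlen, hmem, hreg⟩
    cases rs with
    | nil => simpa using hlen.symm
    | cons x xs =>
      exfalso
      have hsr : IsSMulRegular (MvPolynomial (Fin n) k ⧸ I ^ t) x :=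
        ((RingTheory.Sequence.isRegular_cons_iff _ _ _).mp hreg).1
      have hx0 : x * mon k m' ∈ I ^ t := by
        have hcolon : mMax k n ≤ (I ^ t).colon (Ideal.span {mon k m'}) := by
          rw [mMax]
          apply Ideal.span_le.mpr
          rintro _ ⟨i, rfl⟩
          rw [SetLike.mem_coe, Ideal.mem_colon_span_singleton]
          exact hxi i
        exact Ideal.mem_colon_span_singleton.mp (hcolon (hmem x (List.mem_cons_self (a := x) (l := xs))))
      have hqne : (Ideal.Quotient.mk (I ^ t)) (mon k m') ≠ 0 := by
        rw [ne_eq, Ideal.Quotient.eq_zero_iff_mem]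
        exact hnot
      apply hqne
      apply hsr
      show x • (Ideal.Quotient.mk (I ^ t)) (mon k m') = x • (0 : MvPolynomial (Fin n) k ⧸ I ^ t)
      rw [smul_zero]
      have hsmul : x • (Ideal.Quotient.mk (I ^ t)) (mon k m') =
          (Ideal.Quotient.mk (I ^ t)) (x * mon k m') := rfl
      rw [hsmul, Ideal.Quotient.eq_zero_iff_mem]
      exact hx0
  show quotDepth k (I ^ t) = 0
  unfold quotDepth
  rcases Set.eq_empty_or_nonempty {r : ℕ | ∃ rs : List (MvPolynomial (Fin n) k), rs.length = r ∧
      (∀ x ∈ rs, x ∈ mMax k n) ∧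
      RingTheory.Sequence.IsRegular (MvPolynomial (Fin n) k ⧸ I ^ t) rs} with he | hnemp
  · rw [he]
    exact csSup_empty
  · apply le_antisymm _ (zero_le (a := _))
    exact csSup_le hnemp (fun b hb => le_of_eq (hquot0 b hb))

theorem statement12 {k : Type*} [Field k] {n d : ℕ} (hn : 2 ≤ n) (hd : 3 ≤ d)
    (u v w : Fin n →₀ ℕ) (hu : deg u = d) (hv : deg v = d) (huv : lexLe v u)
    (hx1u : 0 < u (⟨0, by omega⟩ : Fin n)) (hx1v : v (⟨0, by omega⟩ : Fin n) = 0)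
    (hw : deg w = d) (hwv : lexLt w v)
    (hwmax : ∀ m' : Fin n →₀ ℕ, deg m' = d → lexLt m' v → lexLe m' w)
    (hweq : w = u + Finsupp.single (⟨1, by omega⟩ : Fin n) 1 - Finsupp.single (⟨0, by omega⟩ : Fin n) 1)
    (hvle : lexLe v (Finsupp.single (⟨1, by omega⟩ : Fin n) (d-1) + Finsupp.single (⟨n-1, by omega⟩ : Fin n) 1))
    (t : ℕ) (ht : d ≤ t) :
    mon k (t • (Finsupp.single (⟨1, by omega⟩ : Fin n) (d-1) + Finsupp.single (⟨n-1, by omega⟩ : Fin n) 1) - Finsupp.single (⟨n-1, by omega⟩ : Fin n) 1)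
        ∉ (lexIdeal k d u v) ^ t ∧
    (∀ i : Fin n, X i * mon k (t • (Finsupp.single (⟨1, by omega⟩ : Fin n) (d-1) + Finsupp.single (⟨n-1, by omega⟩ : Fin n) 1) - Finsupp.single (⟨n-1, by omega⟩ : Fin n) 1)
        ∈ (lexIdeal k d u v) ^ t) ∧
    quotDepth k ((lexIdeal k d u v) ^ t) = 0 :=
  master hn hd _ _ _ rfl rfl rfl u v hu hx1u hx1v hvle t ht

end LexPaper
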